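/- arXiv:2405.01677 — 8 statements merged into one kernel-verified Lean document; each statement's English description precedes it below -/
import Mathlib

section
/- Let w_{t+1} = w_t + η·(g_r⁺ + g_c⁺)/2 be the soft-switching projected-gradient update. If 0 < η ≤ 1/L and cos θ ≤ 0 (i.e. the reward and cost gradients conflict, 90° ≤ θ), then the performance improvement is lower bounded: f(w_{t+1}) − f(w_t) ≥ η·(3(1 − cos²θ)(‖g_r‖² + ‖g_c‖²) + 2 cos θ (1 − cos²θ)‖g_r‖‖g_c‖)/8. -/
open RealInnerProductSpace

/-- Descent lemma (lower-bound form): for an `L`-smooth function,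
`f (x + v) ≥ f x + ⟪∇f x, v⟫ - L/2 * ‖v‖²`. -/
lemma pcrpo_descent_lemma_lb
    {E : Type*} [NormedAddCommGroup E] [InnerProductSpace ℝ E] [CompleteSpace E]
    (f : E → ℝ) (L : ℝ)
    (hf : Differentiable ℝ f)
    (hlip : ∀ x y : E, ‖gradient f x - gradient f y‖ ≤ L * ‖x - y‖)
    (x v : E) :
    f (x + v) ≥ f x + ⟪gradient f x, v⟫ - L / 2 * ‖v‖ ^ 2 := by
  set g := gradient f x with hg
  have hc : ∀ t : ℝ, HasDerivAt (fun t : ℝ => x + t • v) v t := fun t => by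
    simpa using ((hasDerivAt_id t).smul_const v).const_add x
  have hφ : ∀ t : ℝ, HasDerivAt (fun t : ℝ => f (x + t • v))
      ⟪gradient f (x + t • v), v⟫ t := by
    intro t
    have h1 := (hf (x + t • v)).hasGradientAt.hasFDerivAt
    have := h1.comp_hasDerivAt t (hc t)
    simpa [InnerProductSpace.toDual_apply_apply, Function.comp_def] using this
  set h : ℝ → ℝ := fun t => f (x + t • v) - t * ⟪g, v⟫ + L / 2 * t ^ 2 * ‖v‖ ^ 2 with hh
  have hh' : ∀ t : ℝ, HasDerivAt h
      (⟪gradient f (x + t • v), v⟫ - ⟪g, v⟫ + L * t * ‖v‖ ^ 2) t := by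
    intro t
    have h2 : HasDerivAt (fun t : ℝ => t * ⟪g, v⟫) ⟪g, v⟫ t := by
      simpa using (hasDerivAt_id t).mul_const ⟪g, v⟫
    have h3 : HasDerivAt (fun t : ℝ => L / 2 * t ^ 2 * ‖v‖ ^ 2) (L * t * ‖v‖ ^ 2) t := by
      have := ((hasDerivAt_pow 2 t).const_mul (L / 2)).mul_const (‖v‖ ^ 2)
      exact this.congr_deriv (by push_cast; ring)
    exact ((hφ t).sub h2).add h3
  have hmono : MonotoneOn h (Set.Icc (0:ℝ) 1) := by
    apply monotoneOn_of_deriv_nonneg (convex_Icc 0 1)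
    · exact Continuous.continuousOn (by
        have : Continuous h := by
          apply Continuous.add
          · exact (hf.continuous.comp (by continuity)).sub (by continuity)
          · continuity
        exact this)
    · intro t ht
      exact (hh' t).differentiableAt.differentiableWithinAt
    · intro t ht
      rw [interior_Icc] at ht
      rw [(hh' t).deriv]
      have hb : ⟪g, v⟫ - ⟪gradient f (x + t • v), v⟫ ≤ L * t * ‖v‖ ^ 2 := by
        have h1 : ⟪g - gradient f (x + t • v), v⟫ ≤ ‖g - gradient f (x + t • v)‖ * ‖v‖ :=
          real_inner_le_norm _ _
        have h2 : ‖g - gradient f (x + t • v)‖ ≤ L * (t * ‖v‖) := by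
          have := hlip x (x + t • v)
          simp only [hg]
          calc ‖gradient f x - gradient f (x + t • v)‖ ≤ L * ‖x - (x + t • v)‖ := this
            _ = L * (|t| * ‖v‖) := by rw [show x - (x + t • v) = -(t • v) by abel]; simp [norm_smul]
            _ = L * (t * ‖v‖) := by rw [abs_of_pos ht.1]
        have hv : (0:ℝ) ≤ ‖v‖ := norm_nonneg v
        calc ⟪g, v⟫ - ⟪gradient f (x + t • v), v⟫ = ⟪g - gradient f (x + t • v), v⟫ := by
              rw [inner_sub_left]
          _ ≤ ‖g - gradient f (x + t • v)‖ * ‖v‖ := h1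
          _ ≤ L * (t * ‖v‖) * ‖v‖ := by
              apply mul_le_mul_of_nonneg_right h2 hv
          _ = L * t * ‖v‖ ^ 2 := by ring
      linarith
  have := hmono (Set.left_mem_Icc.2 zero_le_one) (Set.right_mem_Icc.2 zero_le_one) zero_le_one
  simp only [hh] at this
  simp only [zero_smul, add_zero, one_smul, zero_mul, zero_pow, mul_zero] at this
  norm_num at this
  linarith

/-- Lower bound on performance improvement of the soft-switching
projected-gradient update when the reward and cost gradients conflict
(`cos θ ≤ 0`, i.e. `90° ≤ θ`). -/
theorem pcrpo_projected_update_lower_bound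
    {E : Type*} [NormedAddCommGroup E] [InnerProductSpace ℝ E] [CompleteSpace E]
    (f : E → ℝ) (L : ℝ) (hL : 0 < L)
    (hf : Differentiable ℝ f)
    (hlip : ∀ x y : E, ‖gradient f x - gradient f y‖ ≤ L * ‖x - y‖)
    (gr gc : E) (hgr : gr ≠ 0) (hgc : gc ≠ 0)
    (grp gcp : E)
    (hgrp : grp = gr - (⟪gr, gc⟫ / ‖gc‖ ^ 2) • gc)
    (hgcp : gcp = gc - (⟪gr, gc⟫ / ‖gr‖ ^ 2) • gr)
    (cosθ : ℝ) (hcos : cosθ = ⟪gr, gc⟫ / (‖gr‖ * ‖gc‖))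
    (hconflict : cosθ ≤ 0)
    (wt : E) (hw : gradient f wt = gr + gc)
    (η : ℝ) (hη0 : 0 < η) (hηL : η ≤ 1 / L)
    (wt1 : E) (hupdate : wt1 = wt + (η / 2) • (grp + gcp)) :
    f wt1 - f wt ≥
      η * (3 * (1 - cosθ ^ 2) * (‖gr‖ ^ 2 + ‖gc‖ ^ 2)
        + 2 * cosθ * (1 - cosθ ^ 2) * ‖gr‖ * ‖gc‖) / 8 := by
  have ha : (0:ℝ) < ‖gr‖ := norm_pos_iff.2 hgr
  have hb : (0:ℝ) < ‖gc‖ := norm_pos_iff.2 hgc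
  have hc' : ⟪gr, gc⟫ = cosθ * (‖gr‖ * ‖gc‖) := by
    rw [hcos]; field_simp
  have hc2 : ⟪gc, gr⟫ = cosθ * (‖gr‖ * ‖gc‖) := by
    rw [real_inner_comm]; exact hc'
  -- key inner products
  have hS : ⟪gr + gc, grp + gcp⟫ = (1 - cosθ ^ 2) * (‖gr‖ ^ 2 + ‖gc‖ ^ 2) := by
    simp only [hgrp, hgcp, inner_add_left, inner_add_right, inner_sub_left, inner_sub_right,
      real_inner_smul_left, real_inner_smul_right, real_inner_self_eq_norm_sq,
      hc', hc2, norm_smul, Real.norm_eq_abs, mul_pow, sq_abs]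
    field_simp
    ring
  have hQ : ‖grp + gcp‖ ^ 2 = (1 - cosθ ^ 2) * (‖gr‖ ^ 2 + ‖gc‖ ^ 2)
      - 2 * ‖gr‖ * ‖gc‖ * cosθ * (1 - cosθ ^ 2) := by
    rw [← real_inner_self_eq_norm_sq]
    simp only [hgrp, hgcp, inner_add_left, inner_add_right, inner_sub_left, inner_sub_right,
      real_inner_smul_left, real_inner_smul_right, real_inner_self_eq_norm_sq,
      hc', hc2, norm_smul, Real.norm_eq_abs, mul_pow, sq_abs]
    field_simp
    ring
  -- descent lemma
  have key := pcrpo_descent_lemma_lb f L hf hlip wt ((η / 2) • (grp + gcp))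
  rw [hw] at key
  rw [hupdate]
  have hip : ⟪gr + gc, (η / 2) • (grp + gcp)⟫ = (η / 2) * ⟪gr + gc, grp + gcp⟫ :=
    real_inner_smul_right _ _ _
  have hnp : ‖(η / 2) • (grp + gcp)‖ ^ 2 = (η / 2) ^ 2 * ‖grp + gcp‖ ^ 2 := by
    rw [norm_smul, Real.norm_eq_abs, mul_pow, sq_abs]
  rw [hip, hnp, hS, hQ] at key
  have hLη : L * η ≤ 1 := by
    rw [le_div_iff₀ hL] at hηL
    linarith
  have hQnn : (0:ℝ) ≤ (1 - cosθ ^ 2) * (‖gr‖ ^ 2 + ‖gc‖ ^ 2)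
      - 2 * ‖gr‖ * ‖gc‖ * cosθ * (1 - cosθ ^ 2) := by
    have := sq_nonneg ‖grp + gcp‖
    rw [hQ] at this
    exact this
  set A := (1 - cosθ ^ 2) * (‖gr‖ ^ 2 + ‖gc‖ ^ 2) with hA
  set B := 2 * ‖gr‖ * ‖gc‖ * cosθ * (1 - cosθ ^ 2) with hB
  have step1 : L / 2 * ((η / 2) ^ 2 * (A - B)) ≤ η / 8 * (A - B) := by
    nlinarith [mul_nonneg (mul_nonneg hη0.le hQnn) (sub_nonneg.2 hLη)]
  have hgoal_eq : η * (3 * (1 - cosθ ^ 2) * (‖gr‖ ^ 2 + ‖gc‖ ^ 2)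
      + 2 * cosθ * (1 - cosθ ^ 2) * ‖gr‖ * ‖gc‖) / 8
      = η / 2 * A - η / 8 * (A - B) := by
    rw [hA, hB]; ring
  rw [hgoal_eq]
  linarith [key, step1]
end

section
/- Let w_{t+1} = w_t + η·(g_r⁺ + g_c⁺)/2 be the soft-switching projected-gradient update. If 0 < η ≤ 1/L and cos θ ≤ 0 (i.e. 90° ≤ θ), then the performance improvement is upper bounded: f(w_{t+1}) − f(w_t) ≤ (1/L)·(5(1 − cos²θ)(‖g_r‖² + ‖g_c‖²) − 2 cos θ (1 − cos²θ)‖g_r‖‖g_c‖)/8. -/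
open RealInnerProductSpace

lemma descent_lemma_aux {E : Type*} [NormedAddCommGroup E] [InnerProductSpace ℝ E]
    [CompleteSpace E]
    (f : E → ℝ) (L : ℝ) (hL : 0 ≤ L) (hf : Differentiable ℝ f)
    (hlip : ∀ x y : E, ‖gradient f x - gradient f y‖ ≤ L * ‖x - y‖)
    (x v : E) :
    f (x + v) ≤ f x + ⟪gradient f x, v⟫ + L / 2 * ‖v‖ ^ 2 := by
  have hgc : Continuous (fun z : E => gradient f z) := by
    have : LipschitzWith (Real.toNNReal L) (fun z : E => gradient f z) := by
      apply LipschitzWith.of_dist_le_mul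
      intro a b
      rw [dist_eq_norm, dist_eq_norm]
      calc ‖gradient f a - gradient f b‖ ≤ L * ‖a - b‖ := hlip a b
        _ ≤ Real.toNNReal L * ‖a - b‖ :=
            mul_le_mul_of_nonneg_right (Real.le_coe_toNNReal L) (norm_nonneg _)
    exact this.continuous
  set φ : ℝ → ℝ := fun t => ⟪gradient f (x + t • v), v⟫ with hφ
  have hφc : Continuous φ := by
    apply Continuous.inner
    · exact hgc.comp (by continuity)
    · exact continuous_const
  have hderiv : ∀ t : ℝ, HasDerivAt (fun t : ℝ => f (x + t • v)) (φ t) t := by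
    intro t
    have h1 : HasDerivAt (fun t : ℝ => x + t • v) v t := by
      simpa using ((hasDerivAt_id t).smul_const v).const_add x
    have h2 := (hf (x + t • v)).hasGradientAt
    have h3 := (h2.hasFDerivAt).comp_hasDerivAt t h1
    rw [show φ t = fderiv ℝ f (x + t • v) v by
      simp [φ, gradient, InnerProductSpace.toDual_symm_apply]]
    have h4 := by simpa [InnerProductSpace.toDual_apply_apply] using h3
    exact h4
  have hint : f (x + v) - f x = ∫ t in (0:ℝ)..1, φ t := by
    have := intervalIntegral.integral_eq_sub_of_hasDerivAt
      (f := fun t : ℝ => f (x + t • v)) (f' := φ)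
      (fun t _ => hderiv t) (hφc.intervalIntegrable 0 1)
    simp only [one_smul, zero_smul, add_zero] at this
    linarith [this]
  have hmono : (∫ t in (0:ℝ)..1, φ t)
      ≤ ∫ t in (0:ℝ)..1, (⟪gradient f x, v⟫ + L * t * ‖v‖ ^ 2) := by
    apply intervalIntegral.integral_mono_on (by norm_num)
      (hφc.intervalIntegrable 0 1)
      ((by fun_prop : Continuous fun t : ℝ => ⟪gradient f x, v⟫ + L * t * ‖v‖ ^ 2).intervalIntegrable 0 1)
    intro t ht
    have ht0 : 0 ≤ t := ht.1
    have h1 : φ t - ⟪gradient f x, v⟫ = ⟪gradient f (x + t • v) - gradient f x, v⟫ := by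
      rw [inner_sub_left]
    have h2 : ⟪gradient f (x + t • v) - gradient f x, v⟫ ≤ L * t * ‖v‖ ^ 2 := by
      calc ⟪gradient f (x + t • v) - gradient f x, v⟫
          ≤ ‖gradient f (x + t • v) - gradient f x‖ * ‖v‖ := real_inner_le_norm _ _
        _ ≤ (L * ‖(x + t • v) - x‖) * ‖v‖ := by
            gcongr; exact hlip _ _
        _ = L * t * ‖v‖ ^ 2 := by
            rw [add_sub_cancel_left, norm_smul, Real.norm_eq_abs, abs_of_nonneg ht0]
            ring
    linarith
  have hval : (∫ t in (0:ℝ)..1, (⟪gradient f x, v⟫ + L * t * ‖v‖ ^ 2))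
      = ⟪gradient f x, v⟫ + L / 2 * ‖v‖ ^ 2 := by
    have e1 : (∫ t in (0:ℝ)..1, (⟪gradient f x, v⟫ + L * t * ‖v‖ ^ 2))
        = ∫ t in (0:ℝ)..1, (⟪gradient f x, v⟫ + (L * ‖v‖ ^ 2) * t) := by
      congr 1; funext t; ring
    rw [e1, intervalIntegral.integral_add (g := fun t : ℝ => L * ‖v‖ ^ 2 * t) intervalIntegrable_const
      ((continuous_const.mul continuous_id').intervalIntegrable 0 1),
      intervalIntegral.integral_const_mul, integral_id]
    simp only [intervalIntegral.integral_const, smul_eq_mul]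
    ring
  linarith [hint, hmono, hval]

lemma pcrpo_alg_aux (L η k a b D : ℝ) (hL : 0 < L) (hη0 : 0 < η) (hηL : η * L ≤ 1)
    (hk : k ≤ 0) (hk2 : k ^ 2 ≤ 1) (ha : 0 < a) (hb : 0 < b)
    (hD : D ≤ η / 2 * ((1 - k ^ 2) * (a ^ 2 + b ^ 2))
      + L / 2 * ((η / 2) ^ 2 * ((1 - k ^ 2) * (a ^ 2 + b ^ 2 - 2 * k * a * b)))) :
    D ≤ (1 / L) * (5 * (1 - k ^ 2) * (a ^ 2 + b ^ 2) - 2 * k * (1 - k ^ 2) * a * b) / 8 := by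
  have hA : 0 ≤ (1 - k ^ 2) * (a ^ 2 + b ^ 2) := by
    apply mul_nonneg (by linarith) (by positivity)
  have h1 : η / 2 * ((1 - k ^ 2) * (a ^ 2 + b ^ 2))
      ≤ 1 / (2 * L) * ((1 - k ^ 2) * (a ^ 2 + b ^ 2)) := by
    have hη2 : η / 2 ≤ 1 / (2 * L) := by
      rw [div_le_div_iff₀ (by norm_num) (by positivity)]; nlinarith
    exact mul_le_mul_of_nonneg_right hη2 hA
  have hpos : 0 ≤ (1 - k ^ 2) * (a ^ 2 + b ^ 2 - 2 * k * a * b) := by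
    apply mul_nonneg (by linarith)
    nlinarith [mul_nonneg (neg_nonneg.mpr hk) (mul_pos ha hb).le]
  have h2 : L / 2 * ((η / 2) ^ 2 * ((1 - k ^ 2) * (a ^ 2 + b ^ 2 - 2 * k * a * b)))
      ≤ 1 / (8 * L) * ((1 - k ^ 2) * (a ^ 2 + b ^ 2 - 2 * k * a * b)) := by
    have key : L / 2 * (η / 2) ^ 2 ≤ 1 / (8 * L) := by
      have h : (η * L) * (η * L) ≤ 1 := by nlinarith [mul_le_mul hηL hηL (by positivity : (0:ℝ) ≤ η * L) zero_le_one]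
      rw [le_div_iff₀ (by positivity)]
      nlinarith [h]
    calc L / 2 * ((η / 2) ^ 2 * ((1 - k ^ 2) * (a ^ 2 + b ^ 2 - 2 * k * a * b)))
        = (L / 2 * (η / 2) ^ 2) * ((1 - k ^ 2) * (a ^ 2 + b ^ 2 - 2 * k * a * b)) := by ring
      _ ≤ _ := mul_le_mul_of_nonneg_right key hpos
  have heq : 1 / (2 * L) * ((1 - k ^ 2) * (a ^ 2 + b ^ 2))
      + 1 / (8 * L) * ((1 - k ^ 2) * (a ^ 2 + b ^ 2 - 2 * k * a * b))
      = (1 / L) * (5 * (1 - k ^ 2) * (a ^ 2 + b ^ 2) - 2 * k * (1 - k ^ 2) * a * b) / 8 := by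
    field_simp
    ring
  linarith [hD, h1, h2, heq.le, heq.ge]

/-- Upper bound on performance improvement of the soft-switching
projected-gradient update when the reward and cost gradients conflict
(`cos θ ≤ 0`, i.e. `90° ≤ θ`). -/
theorem pcrpo_projected_update_upper_bound
    {E : Type*} [NormedAddCommGroup E] [InnerProductSpace ℝ E] [CompleteSpace E]
    (f : E → ℝ) (L : ℝ) (hL : 0 < L)
    (hf : Differentiable ℝ f)
    (hlip : ∀ x y : E, ‖gradient f x - gradient f y‖ ≤ L * ‖x - y‖)
    (gr gc : E) (hgr : gr ≠ 0) (hgc : gc ≠ 0)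
    (grp gcp : E)
    (hgrp : grp = gr - (⟪gr, gc⟫ / ‖gc‖ ^ 2) • gc)
    (hgcp : gcp = gc - (⟪gr, gc⟫ / ‖gr‖ ^ 2) • gr)
    (cosθ : ℝ) (hcos : cosθ = ⟪gr, gc⟫ / (‖gr‖ * ‖gc‖))
    (hconflict : cosθ ≤ 0)
    (wt : E) (hw : gradient f wt = gr + gc)
    (η : ℝ) (hη0 : 0 < η) (hηL : η ≤ 1 / L)
    (wt1 : E) (hupdate : wt1 = wt + (η / 2) • (grp + gcp)) :
    f wt1 - f wt ≤
      (1 / L) * (5 * (1 - cosθ ^ 2) * (‖gr‖ ^ 2 + ‖gc‖ ^ 2)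
        - 2 * cosθ * (1 - cosθ ^ 2) * ‖gr‖ * ‖gc‖) / 8 := by
  set a := ‖gr‖ with ha
  set b := ‖gc‖ with hb
  have ha0 : 0 < a := norm_pos_iff.mpr hgr
  have hb0 : 0 < b := norm_pos_iff.mpr hgc
  set c := ⟪gr, gc⟫ with hc
  have hcab : c = cosθ * (a * b) := by
    rw [hcos]; field_simp
  have hgrgr : ⟪gr, gr⟫ = a ^ 2 := real_inner_self_eq_norm_sq gr
  have hgcgc : ⟪gc, gc⟫ = b ^ 2 := real_inner_self_eq_norm_sq gc
  have hcomm : ⟪gc, gr⟫ = c := by rw [hc, real_inner_comm]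
  -- inner product of gradient with direction
  have hI : ⟪gr + gc, grp + gcp⟫ = (1 - cosθ ^ 2) * (a ^ 2 + b ^ 2) := by
    rw [hgrp, hgcp]
    simp only [inner_add_left, inner_add_right, inner_sub_left, inner_sub_right,
      real_inner_smul_left, real_inner_smul_right, hgrgr, hgcgc, hcomm, ← hc]
    rw [hcab]
    field_simp
    ring
  have hN : ‖grp + gcp‖ ^ 2 = (1 - cosθ ^ 2) * (a ^ 2 + b ^ 2 - 2 * cosθ * a * b) := by
    rw [← real_inner_self_eq_norm_sq, hgrp, hgcp]
    simp only [inner_add_left, inner_add_right, inner_sub_left, inner_sub_right,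
      real_inner_smul_left, real_inner_smul_right, hgrgr, hgcgc, hcomm, ← hc]
    rw [hcab]
    field_simp
    ring
  have hdesc := descent_lemma_aux f L hL.le hf hlip wt ((η / 2) • (grp + gcp))
  rw [← hupdate, hw] at hdesc
  rw [real_inner_smul_right, hI] at hdesc
  rw [norm_smul, mul_pow, Real.norm_eq_abs, abs_of_pos (by positivity), hN] at hdesc
  -- now pure algebra
  have habs := abs_le.mp (abs_real_inner_le_norm gr gc)
  have hcos2 : cosθ ^ 2 ≤ 1 := by
    rw [hcos, div_pow, div_le_one (by positivity)]
    nlinarith [habs.1, habs.2]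
  have hηL' : η * L ≤ 1 := by
    rw [le_div_iff₀ hL] at hηL; linarith
  exact pcrpo_alg_aux L η cosθ a b _ hL hη0 hηL' hconflict hcos2 ha0 hb0
    (by linarith [hdesc])
end

section
/- Monotonic improvement for conflicting gradients: let w_{t+1} = w_t + η·(g_r⁺ + g_c⁺)/2 with 0 < η ≤ 1/L. If −1 < cos θ ≤ 0 (i.e. 90° ≤ θ < 180°, so sin θ ≠ 0), then f(w_{t+1}) − f(w_t) > 0, i.e. the projected-gradient update strictly improves the performance. -/
open RealInnerProductSpace

lemma descent_aux {E : Type*} [NormedAddCommGroup E] [InnerProductSpace ℝ E] [CompleteSpace E]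
    (f : E → ℝ) (L : ℝ) (hL : 0 ≤ L) (hf : Differentiable ℝ f)
    (hlip : ∀ x y : E, ‖gradient f x - gradient f y‖ ≤ L * ‖x - y‖) (x y : E) :
    |f y - f x - ⟪gradient f x, y - x⟫| ≤ L * ‖y - x‖ * ‖y - x‖ := by
  have hfd : ∀ z : E, fderiv ℝ f z = InnerProductSpace.toDual ℝ E (gradient f z) := by
    intro z
    simp [gradient]
  have key := Convex.norm_image_sub_le_of_norm_fderiv_le'
    (f := f) (s := segment ℝ x y) (φ := fderiv ℝ f x) (C := L * ‖y - x‖) (x := x) (y := y)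
    (fun z _ => hf z)
    (by
      intro z hz
      obtain ⟨a, b, ha, hb, hab, rfl⟩ := hz
      have hzx : (a • x + b • y) - x = b • (y - x) := by
        have : a = 1 - b := by linarith
        rw [this]; module
      have h1 : ‖fderiv ℝ f (a • x + b • y) - fderiv ℝ f x‖
          = ‖gradient f (a • x + b • y) - gradient f x‖ := by
        rw [hfd, hfd, ← map_sub]
        exact (InnerProductSpace.toDual ℝ E).norm_map _
      rw [h1]
      calc ‖gradient f (a • x + b • y) - gradient f x‖
          ≤ L * ‖(a • x + b • y) - x‖ := hlip _ _
        _ ≤ L * ‖y - x‖ := by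
            rw [hzx, norm_smul]
            have h2 : ‖b‖ * ‖y - x‖ ≤ ‖y - x‖ := by
              rw [Real.norm_eq_abs, abs_of_nonneg hb]
              nlinarith [norm_nonneg (y - x)]
            exact mul_le_mul_of_nonneg_left h2 hL)
    (convex_segment x y) (left_mem_segment ℝ x y) (right_mem_segment ℝ x y)
  have hφ : (fderiv ℝ f x) (y - x) = ⟪gradient f x, y - x⟫ := by
    rw [hfd]; exact InnerProductSpace.toDual_apply_apply
  rw [hφ] at key
  rw [← Real.norm_eq_abs]; linarith [key]

set_option maxHeartbeats 1600000 in
/-- Monotonic improvement for conflicting gradients: if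
`-1 < cos θ ≤ 0` (i.e. `90° ≤ θ < 180°`), the projected-gradient update
strictly improves the performance. -/
theorem pcrpo_projected_update_monotonic_improvement
    {E : Type*} [NormedAddCommGroup E] [InnerProductSpace ℝ E] [CompleteSpace E]
    (f : E → ℝ) (L : ℝ) (hL : 0 < L)
    (hf : Differentiable ℝ f)
    (hlip : ∀ x y : E, ‖gradient f x - gradient f y‖ ≤ L * ‖x - y‖)
    (gr gc : E) (hgr : gr ≠ 0) (hgc : gc ≠ 0)
    (grp gcp : E)
    (hgrp : grp = gr - (⟪gr, gc⟫ / ‖gc‖ ^ 2) • gc)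
    (hgcp : gcp = gc - (⟪gr, gc⟫ / ‖gr‖ ^ 2) • gr)
    (cosθ : ℝ) (hcos : cosθ = ⟪gr, gc⟫ / (‖gr‖ * ‖gc‖))
    (hcos_lb : -1 < cosθ) (hcos_ub : cosθ ≤ 0)
    (wt : E) (hw : gradient f wt = gr + gc)
    (η : ℝ) (hη0 : 0 < η) (hηL : η ≤ 1 / L)
    (wt1 : E) (hupdate : wt1 = wt + (η / 2) • (grp + gcp)) :
    f wt1 - f wt > 0 := by
  have ha : (0:ℝ) < ‖gr‖ := norm_pos_iff.mpr hgr
  have hb : (0:ℝ) < ‖gc‖ := norm_pos_iff.mpr hgc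
  have hab : (0:ℝ) < ‖gr‖ * ‖gc‖ := mul_pos ha hb
  have hcab : -(‖gr‖ * ‖gc‖) < ⟪gr, gc⟫ := by
    rw [hcos, lt_div_iff₀ hab] at hcos_lb
    linarith
  have hc0 : ⟪gr, gc⟫ ≤ 0 := by
    rw [hcos, div_nonpos_iff] at hcos_ub
    rcases hcos_ub with ⟨h1, h2⟩ | ⟨h1, h2⟩
    · linarith
    · exact h1
  have hS : (‖gr‖^2 * ‖gc‖^2) * ⟪gr + gc, grp + gcp⟫
      = (‖gr‖^2 + ‖gc‖^2) * (‖gr‖^2 * ‖gc‖^2)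
        - ⟪gr, gc⟫^2 * ‖gr‖^2 - ⟪gr, gc⟫^2 * ‖gc‖^2 := by
    simp only [hgrp, hgcp, inner_add_left, inner_add_right, inner_sub_left, inner_sub_right,
      real_inner_smul_left, real_inner_smul_right, real_inner_self_eq_norm_sq,
      real_inner_comm gc gr]
    field_simp
    ring
  have hN : (‖gr‖^2 * ‖gc‖^2) * ⟪grp + gcp, grp + gcp⟫
      = (‖gr‖^2 + ‖gc‖^2) * (‖gr‖^2 * ‖gc‖^2)
        - ⟪gr, gc⟫^2 * ‖gr‖^2 - ⟪gr, gc⟫^2 * ‖gc‖^2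
        - 2 * ⟪gr, gc⟫ * (‖gr‖^2 * ‖gc‖^2) + 2 * ⟪gr, gc⟫^3 := by
    simp only [hgrp, hgcp, inner_add_left, inner_add_right, inner_sub_left, inner_sub_right,
      real_inner_smul_left, real_inner_smul_right, real_inner_self_eq_norm_sq,
      real_inner_comm gc gr, norm_smul, mul_pow, Real.norm_eq_abs, sq_abs]
    field_simp
    try simp only [real_inner_comm gc gr]
    ring
  set a := ‖gr‖
  set b := ‖gc‖
  set c := ⟪gr, gc⟫
  set S := ⟪gr + gc, grp + gcp⟫
  set N := ⟪grp + gcp, grp + gcp⟫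
  have hNnn : (0:ℝ) ≤ N := real_inner_self_nonneg
  have hkey : N < 2 * S := by
    have h1 : 0 < a^2 * b^2 - c^2 := by nlinarith
    have h2 : 0 < a^2 + b^2 + 2 * c := by nlinarith [sq_nonneg (a - b)]
    have h3 : 0 < (a^2 * b^2 - c^2) * (a^2 + b^2 + 2 * c) := mul_pos h1 h2
    have h4 : (a^2 * b^2) * (2 * S - N) = (a^2 * b^2 - c^2) * (a^2 + b^2 + 2 * c) := by
      linear_combination 2 * hS - hN
    have h5 : 0 < (a^2 * b^2) * (2 * S - N) := h4 ▸ h3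
    by_contra hcon
    push_neg at hcon
    have h6 : 0 < a^2 * b^2 := by positivity
    nlinarith
  have hdesc := descent_aux f L hL.le hf hlip wt wt1
  have hdiff : wt1 - wt = (η / 2) • (grp + gcp) := by rw [hupdate]; abel
  have hinner : ⟪gradient f wt, wt1 - wt⟫ = (η / 2) * S := by
    rw [hw, hdiff, real_inner_smul_right]
  have hnorm : ‖wt1 - wt‖ * ‖wt1 - wt‖ = (η / 2)^2 * N := by
    rw [hdiff, ← real_inner_self_eq_norm_mul_norm, real_inner_smul_left,
      real_inner_smul_right]
    ring
  rw [hinner] at hdesc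
  rw [mul_assoc, hnorm] at hdesc
  have hLη : L * η ≤ 1 := by
    rw [le_div_iff₀ hL] at hηL
    linarith
  have h3 : f wt1 - f wt ≥ (η / 2) * S - L * ((η / 2)^2 * N) := by
    have := abs_le.mp hdesc
    linarith [this.1]
  have h4 : L * ((η / 2)^2 * N) ≤ (η / 4) * N := by
    have h5 : L * (η / 2)^2 ≤ η / 4 := by nlinarith
    have h6 := mul_le_mul_of_nonneg_right h5 hNnn
    calc L * ((η / 2)^2 * N) = L * (η / 2)^2 * N := by ring
      _ ≤ (η / 4) * N := h6
  have h5 : 0 < (η / 4) * (2 * S - N) :=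
    mul_pos (by linarith) (by linarith)
  linarith
end

section
/- Let w_{t+1} = w_t + η·(g_r + g_c)/2 be the averaged-gradient update. If 0 < η ≤ 1/L and cos θ ≥ 0 (i.e. 0° ≤ θ ≤ 90°), then the performance improvement is lower bounded: f(w_{t+1}) − f(w_t) ≥ η·(3‖g_r‖² + 6 cos θ ‖g_r‖‖g_c‖ + 3‖g_c‖²)/8. -/
open RealInnerProductSpace

lemma descent_lemma
    {E : Type*} [NormedAddCommGroup E] [InnerProductSpace ℝ E] [CompleteSpace E]
    (f : E → ℝ) (L : ℝ) (hL : 0 ≤ L)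
    (hf : Differentiable ℝ f)
    (hlip : ∀ x y : E, ‖gradient f x - gradient f y‖ ≤ L * ‖x - y‖)
    (x v : E) :
    f (x + v) - f x ≥ ⟪gradient f x, v⟫ - L / 2 * ‖v‖ ^ 2 := by
  have hd : ∀ t : ℝ, HasDerivAt (fun t : ℝ => f (x + t • v))
      ⟪gradient f (x + t • v), v⟫ t := by
    intro t
    have h1 : HasDerivAt (fun t : ℝ => x + t • v) v t := by
      simpa using ((hasDerivAt_id t).smul_const v).const_add x
    have h2 := (hf (x + t • v)).hasGradientAt.hasFDerivAt
    exact h2.comp_hasDerivAt t h1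
  have hgcont : Continuous fun t : ℝ => gradient f (x + t • v) := by
    have : LipschitzWith (Real.toNNReal (L * ‖v‖)) (fun t : ℝ => gradient f (x + t • v)) := by
      apply LipschitzWith.of_dist_le_mul
      intro a b
      rw [Real.coe_toNNReal _ (by positivity), dist_eq_norm, dist_eq_norm]
      calc ‖gradient f (x + a • v) - gradient f (x + b • v)‖
          ≤ L * ‖(x + a • v) - (x + b • v)‖ := hlip _ _
        _ = L * ‖v‖ * |a - b| := by
            rw [show (x + a • v) - (x + b • v) = (a - b) • v by module,
              norm_smul, Real.norm_eq_abs]; ring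
      -- Real.toNNReal coe
    exact this.continuous
  have hcont : Continuous fun t : ℝ => ⟪gradient f (x + t • v), v⟫ :=
    hgcont.inner continuous_const
  have hint : f (x + v) - f x = ∫ t in (0:ℝ)..1, ⟪gradient f (x + t • v), v⟫ := by
    rw [intervalIntegral.integral_eq_sub_of_hasDerivAt (fun t _ => hd t)
      (hcont.intervalIntegrable 0 1)]
    simp
  rw [hint]
  have hlow : ∀ t ∈ Set.Icc (0:ℝ) 1,
      ⟪gradient f x, v⟫ - L * ‖v‖ ^ 2 * t ≤ ⟪gradient f (x + t • v), v⟫ := by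
    intro t ht
    have : |⟪gradient f (x + t • v) - gradient f x, v⟫| ≤ L * ‖v‖ ^ 2 * t := by
      calc |⟪gradient f (x + t • v) - gradient f x, v⟫|
          ≤ ‖gradient f (x + t • v) - gradient f x‖ * ‖v‖ := abs_real_inner_le_norm _ _
        _ ≤ (L * ‖(x + t • v) - x‖) * ‖v‖ := by
            gcongr; exact hlip _ _
        _ = L * ‖v‖ ^ 2 * t := by
            rw [show (x + t • v) - x = t • v by abel, norm_smul, Real.norm_eq_abs,
              abs_of_nonneg ht.1]; ring
    have h2 : ⟪gradient f (x + t • v) - gradient f x, v⟫ ≥ -(L * ‖v‖ ^ 2 * t) :=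
      neg_le_of_abs_le this
    rw [inner_sub_left] at h2
    linarith
  calc (∫ t in (0:ℝ)..1, ⟪gradient f (x + t • v), v⟫)
      ≥ ∫ t in (0:ℝ)..1, (⟪gradient f x, v⟫ - L * ‖v‖ ^ 2 * t) := by
        apply intervalIntegral.integral_mono_on zero_le_one
        · exact (Continuous.intervalIntegrable (by continuity) 0 1)
        · exact hcont.intervalIntegrable 0 1
        · exact hlow
    _ = ⟪gradient f x, v⟫ - L / 2 * ‖v‖ ^ 2 := by
        have hsub : (∫ t in (0:ℝ)..1, (⟪gradient f x, v⟫ - L * ‖v‖ ^ 2 * t))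
            = (∫ _t in (0:ℝ)..1, (⟪gradient f x, v⟫ : ℝ))
              - ∫ t in (0:ℝ)..1, L * ‖v‖ ^ 2 * t := by
          apply intervalIntegral.integral_sub intervalIntegrable_const
          exact (continuous_const.mul continuous_id).intervalIntegrable 0 1
        rw [hsub, intervalIntegral.integral_const_mul, integral_id]
        simp
        ring

/-- Lower bound on performance improvement of the averaged-gradient
update when the gradients do not conflict (`cos θ ≥ 0`, i.e. `0° ≤ θ ≤ 90°`). -/
theorem pcrpo_averaged_update_lower_bound
    {E : Type*} [NormedAddCommGroup E] [InnerProductSpace ℝ E] [CompleteSpace E]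
    (f : E → ℝ) (L : ℝ) (hL : 0 < L)
    (hf : Differentiable ℝ f)
    (hlip : ∀ x y : E, ‖gradient f x - gradient f y‖ ≤ L * ‖x - y‖)
    (gr gc : E) (hgr : gr ≠ 0) (hgc : gc ≠ 0)
    (cosθ : ℝ) (hcos : cosθ = ⟪gr, gc⟫ / (‖gr‖ * ‖gc‖))
    (hnonconflict : 0 ≤ cosθ)
    (wt : E) (hw : gradient f wt = gr + gc)
    (η : ℝ) (hη0 : 0 < η) (hηL : η ≤ 1 / L)
    (wt1 : E) (hupdate : wt1 = wt + (η / 2) • (gr + gc)) :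
    f wt1 - f wt ≥
      η * (3 * ‖gr‖ ^ 2 + 6 * cosθ * ‖gr‖ * ‖gc‖ + 3 * ‖gc‖ ^ 2) / 8 := by
  have key := descent_lemma f L hL.le hf hlip wt ((η / 2) • (gr + gc))
  rw [← hupdate] at key
  have hinner : ⟪gradient f wt, (η / 2) • (gr + gc)⟫ = (η / 2) * ‖gr + gc‖ ^ 2 := by
    rw [hw, real_inner_smul_right, real_inner_self_eq_norm_sq]
  have hnv : ‖(η / 2) • (gr + gc)‖ ^ 2 = (η / 2) ^ 2 * ‖gr + gc‖ ^ 2 := by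
    rw [norm_smul, mul_pow, Real.norm_eq_abs, sq_abs]
  rw [hinner, hnv] at key
  have hip : cosθ * ‖gr‖ * ‖gc‖ = ⟪gr, gc⟫ := by
    rw [hcos]
    have h1 : ‖gr‖ ≠ 0 := norm_ne_zero_iff.mpr hgr
    have h2 : ‖gc‖ ≠ 0 := norm_ne_zero_iff.mpr hgc
    field_simp
  have hnorm : ‖gr + gc‖ ^ 2 = ‖gr‖ ^ 2 + 2 * ⟪gr, gc⟫ + ‖gc‖ ^ 2 := norm_add_sq_real _ _
  have hLη : L * η ≤ 1 := by
    rw [le_div_iff₀ hL] at hηL; linarith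
  nlinarith [mul_nonneg (mul_nonneg hη0.le (sub_nonneg.2 hLη)) (sq_nonneg ‖gr + gc‖)]
end

section
/- Monotonic improvement for non-conflicting gradients: let w_{t+1} = w_t + η·(g_r + g_c)/2 with 0 < η ≤ 1/L. If cos θ ≥ 0 (i.e. 0° ≤ θ ≤ 90°), then f(w_{t+1}) − f(w_t) > 0, i.e. the averaged-gradient update strictly improves the performance. -/
open RealInnerProductSpace

/-- Monotonic improvement for non-conflicting gradients: if
`cos θ ≥ 0` (i.e. `0° ≤ θ ≤ 90°`), the averaged-gradient update strictly
improves the performance. -/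
theorem pcrpo_averaged_update_monotonic_improvement
    {E : Type*} [NormedAddCommGroup E] [InnerProductSpace ℝ E] [CompleteSpace E]
    (f : E → ℝ) (L : ℝ) (hL : 0 < L)
    (hf : Differentiable ℝ f)
    (hlip : ∀ x y : E, ‖gradient f x - gradient f y‖ ≤ L * ‖x - y‖)
    (gr gc : E) (hgr : gr ≠ 0) (hgc : gc ≠ 0)
    (cosθ : ℝ) (hcos : cosθ = ⟪gr, gc⟫ / (‖gr‖ * ‖gc‖))
    (hnonconflict : 0 ≤ cosθ)
    (wt : E) (hw : gradient f wt = gr + gc)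
    (η : ℝ) (hη0 : 0 < η) (hηL : η ≤ 1 / L)
    (wt1 : E) (hupdate : wt1 = wt + (η / 2) • (gr + gc)) :
    f wt1 - f wt > 0 := by
  have hgrn : 0 < ‖gr‖ := norm_pos_iff.2 hgr
  have hgcn : 0 < ‖gc‖ := norm_pos_iff.2 hgc
  have hinner : (0:ℝ) ≤ ⟪gr, gc⟫ := by
    have h1 : 0 < ‖gr‖ * ‖gc‖ := mul_pos hgrn hgcn
    have h2 := hnonconflict
    rw [hcos] at h2
    have := mul_nonneg h2 h1.le
    rwa [div_mul_cancel₀ _ h1.ne'] at this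
  have hgsq : ‖gr + gc‖ ^ 2 = ‖gr‖ ^ 2 + 2 * ⟪gr, gc⟫ + ‖gc‖ ^ 2 :=
    norm_add_sq_real gr gc
  have hgpos : 0 < ‖gr + gc‖ ^ 2 := by nlinarith
  have hvdef : wt1 - wt = (η / 2) • (gr + gc) := by rw [hupdate]; abel
  have hnormv : ‖wt1 - wt‖ = (η / 2) * ‖gr + gc‖ := by
    rw [hvdef, norm_smul, Real.norm_eq_abs, abs_of_pos (by linarith)]
  -- descent-type bound via mean value inequality
  have key : ‖f wt1 - f wt - (fderiv ℝ f wt) (wt1 - wt)‖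
      ≤ (L * ‖wt1 - wt‖) * ‖wt1 - wt‖ := by
    apply Convex.norm_image_sub_le_of_norm_fderiv_le'
      (s := Metric.closedBall wt ‖wt1 - wt‖) (fun x _ => hf.differentiableAt)
    · intro x hx
      have heq : ‖fderiv ℝ f x - fderiv ℝ f wt‖ = ‖gradient f x - gradient f wt‖ := by
        simp only [gradient]
        rw [← map_sub, LinearIsometryEquiv.norm_map]
      rw [heq]
      calc ‖gradient f x - gradient f wt‖ ≤ L * ‖x - wt‖ := hlip x wt
        _ ≤ L * ‖wt1 - wt‖ :=
          mul_le_mul_of_nonneg_left (mem_closedBall_iff_norm.mp hx) hL.le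
    · exact convex_closedBall _ _
    · exact Metric.mem_closedBall_self (norm_nonneg _)
    · exact mem_closedBall_iff_norm.mpr le_rfl
  have hfd : (fderiv ℝ f wt) (wt1 - wt) = ⟪gradient f wt, wt1 - wt⟫ := by
    have h := (hf.differentiableAt (x := wt)).hasGradientAt
    rw [hasGradientAt_iff_hasFDerivAt] at h
    rw [h.fderiv]; exact InnerProductSpace.toDual_apply_apply
  have hA : (fderiv ℝ f wt) (wt1 - wt) = (η / 2) * ‖gr + gc‖ ^ 2 := by
    rw [hfd, hw, hvdef, real_inner_smul_right, real_inner_self_eq_norm_sq]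
    try ring
  have hLη : L * η ≤ 1 := by
    rw [le_div_iff₀ hL] at hηL; linarith [hηL]
  rw [Real.norm_eq_abs] at key
  have hlow := (abs_le.mp key).1
  rw [hA, hnormv] at hlow
  nlinarith [hlow, hgpos, mul_pos hη0 hgpos, hL, hLη]
end

section
/- The first-order gain of the projected update in the direction of the true gradient is always nonnegative: for any nonzero g_r, g_c, one has ⟨g_r + g_c, g_r⁺ + g_c⁺⟩ ≥ 0. -/
open RealInnerProductSpace

/-- The first-order gain of the projected update in the direction
of the true gradient is always nonnegative. -/
theorem pcrpo_first_order_gain_nonneg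
    {E : Type*} [NormedAddCommGroup E] [InnerProductSpace ℝ E]
    (gr gc : E) (hgr : gr ≠ 0) (hgc : gc ≠ 0)
    (grp gcp : E)
    (hgrp : grp = gr - (⟪gr, gc⟫ / ‖gc‖ ^ 2) • gc)
    (hgcp : gcp = gc - (⟪gr, gc⟫ / ‖gr‖ ^ 2) • gr) :
    ⟪gr + gc, grp + gcp⟫ ≥ 0 := by
  subst hgrp hgcp
  have ha : ‖gr‖ ≠ 0 := norm_ne_zero_iff.mpr hgr
  have hb : ‖gc‖ ≠ 0 := norm_ne_zero_iff.mpr hgc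
  have hcs : ⟪gr, gc⟫ * ⟪gr, gc⟫ ≤ ‖gr‖ ^ 2 * ‖gc‖ ^ 2 := by
    have := abs_real_inner_le_norm gr gc
    nlinarith [abs_nonneg ⟪gr, gc⟫, sq_abs ⟪gr, gc⟫, norm_nonneg gr, norm_nonneg gc]
  simp only [inner_add_left, inner_add_right, inner_sub_right, inner_smul_right,
    real_inner_self_eq_norm_sq, real_inner_comm gc gr]
  have hcs' : ⟪gc, gr⟫ * ⟪gc, gr⟫ ≤ ‖gr‖ ^ 2 * ‖gc‖ ^ 2 := by
    have h := real_inner_comm gc gr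
    rw [← h]; exact hcs
  set a := ‖gr‖ ^ 2 with hadef
  set b := ‖gc‖ ^ 2 with hbdef
  set c : ℝ := ⟪gc, gr⟫ with hcdef
  have ha2 : (0:ℝ) < a := by positivity
  have hb2 : (0:ℝ) < b := by positivity
  have key : a + c - c / b * (c + b) + (c + b - c / a * (a + c)) =
      (a + b) * (a * b - c * c) / (a * b) := by
    field_simp; ring
  rw [ge_iff_le, key]
  have h1 : 0 ≤ (a + b) * (a * b - c * c) := by nlinarith
  exact div_nonneg h1 (by positivity)
end

section
/- The inner product between the two projected gradients satisfies ⟨g_r⁺, g_c⁺⟩ = −⟨g_r,g_c⟩·(1 − cos²θ) = −⟨g_r,g_c⟩·sin²θ; in particular, if the original gradients conflict (⟨g_r,g_c⟩ ≤ 0) then the projected gradients no longer conflict (⟨g_r⁺,g_c⁺⟩ ≥ 0). -/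
open RealInnerProductSpace

/-- The inner product between the two projected gradients equals
`−⟨g_r,g_c⟩·(1 − cos²θ) = −⟨g_r,g_c⟩·sin²θ`; in particular, conflicting
original gradients give non-conflicting projected gradients. -/
theorem pcrpo_projected_gradients_no_conflict
    {E : Type*} [NormedAddCommGroup E] [InnerProductSpace ℝ E]
    (gr gc : E) (hgr : gr ≠ 0) (hgc : gc ≠ 0)
    (grp gcp : E)
    (hgrp : grp = gr - (⟪gr, gc⟫ / ‖gc‖ ^ 2) • gc)
    (hgcp : gcp = gc - (⟪gr, gc⟫ / ‖gr‖ ^ 2) • gr)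
    (cosθ : ℝ) (hcos : cosθ = ⟪gr, gc⟫ / (‖gr‖ * ‖gc‖)) :
    ⟪grp, gcp⟫ = -⟪gr, gc⟫ * (1 - cosθ ^ 2) ∧
    (⟪gr, gc⟫ ≤ 0 → ⟪grp, gcp⟫ ≥ 0) := by
  have hnr : ‖gr‖ ≠ 0 := norm_ne_zero_iff.mpr hgr
  have hnc : ‖gc‖ ≠ 0 := norm_ne_zero_iff.mpr hgc
  have hrc : ⟪gc, gr⟫ = ⟪gr, gc⟫ := real_inner_comm _ _
  have key : ⟪grp, gcp⟫ = -⟪gr, gc⟫ * (1 - cosθ ^ 2) := by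
    rw [hgrp, hgcp, hcos]
    simp only [inner_sub_left, inner_sub_right, real_inner_smul_left,
      real_inner_smul_right, real_inner_self_eq_norm_sq, hrc]
    field_simp
    ring
  refine ⟨key, fun h => ?_⟩
  have hc1 : |cosθ| ≤ 1 := by
    rw [hcos]; exact abs_real_inner_div_norm_mul_norm_le_one gr gc
  have : cosθ ^ 2 ≤ 1 := by
    have := sq_abs cosθ ▸ pow_le_one₀ (abs_nonneg cosθ) hc1
    simpa [sq_abs] using pow_le_pow_left₀ (abs_nonneg cosθ) hc1 2
  rw [key]
  have : (0:ℝ) ≤ 1 - cosθ ^ 2 := by linarith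
  nlinarith
end

section
/- Comparison of the two gradient-manipulation strategies for non-conflicting gradients: if ⟨g_r,g_c⟩ > 0 (i.e. θ < 90°), then ‖(g_r + g_c)/2‖ > ‖(g_r⁺ + g_c⁺)/2‖, i.e. the averaged gradient has strictly larger norm than the averaged projected gradient, so averaging avoids gradient degradation in this regime. -/
open RealInnerProductSpace

lemma pcrpo_key_scalar (A B s : ℝ) (hA : 0 < A) (hB : 0 < B) (hs : 0 < s)
    (cs : s * s ≤ A * B) :
    (1 - s / A) ^ 2 * A + 2 * ((1 - s / A) * (1 - s / B) * s) + (1 - s / B) ^ 2 * B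
      < A + 2 * s + B := by
  rw [← mul_lt_mul_iff_of_pos_right (mul_pos hA hB)]
  have lhs_eq : ((1 - s / A) ^ 2 * A + 2 * ((1 - s / A) * (1 - s / B) * s)
      + (1 - s / B) ^ 2 * B) * (A * B)
      = (A - s) ^ 2 * B + 2 * ((A - s) * (B - s) * s) + (B - s) ^ 2 * A := by
    field_simp
  rw [lhs_eq]
  nlinarith [mul_pos hA hB, mul_pos hs (mul_pos hA hB), sq_nonneg s,
    mul_le_mul_of_nonneg_left cs (le_of_lt hs)]

/-- For non-conflicting gradients (`⟨g_r,g_c⟫ > 0`), the averaged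
gradient has strictly larger norm than the averaged projected gradient. -/
theorem pcrpo_averaging_beats_projection_nonconflict
    {E : Type*} [NormedAddCommGroup E] [InnerProductSpace ℝ E]
    (gr gc : E) (hgr : gr ≠ 0) (hgc : gc ≠ 0)
    (grp gcp : E)
    (hgrp : grp = gr - (⟪gr, gc⟫ / ‖gc‖ ^ 2) • gc)
    (hgcp : gcp = gc - (⟪gr, gc⟫ / ‖gr‖ ^ 2) • gr)
    (hpos : ⟪gr, gc⟫ > 0) :
    ‖(1 / 2 : ℝ) • (gr + gc)‖ > ‖(1 / 2 : ℝ) • (grp + gcp)‖ := by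
  have ha : (0:ℝ) < ‖gr‖ := norm_pos_iff.2 hgr
  have hb : (0:ℝ) < ‖gc‖ := norm_pos_iff.2 hgc
  set s : ℝ := ⟪gr, gc⟫ with hs
  have cs : s * s ≤ (‖gr‖ ^ 2) * (‖gc‖ ^ 2) := by
    have := real_inner_mul_inner_self_le gr gc
    simpa [real_inner_self_eq_norm_sq, ← hs] using this
  set u : ℝ := s / ‖gr‖ ^ 2 with hu
  set v : ℝ := s / ‖gc‖ ^ 2 with hv
  have hsum : grp + gcp = (1 - u) • gr + (1 - v) • gc := by
    rw [hgrp, hgcp]; module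
  apply lt_of_pow_lt_pow_left₀ 2 (norm_nonneg _)
  rw [hsum, norm_smul, norm_smul, mul_pow, mul_pow]
  have h1 : ‖gr + gc‖ ^ 2 = ‖gr‖ ^ 2 + 2 * s + ‖gc‖ ^ 2 := by
    rw [norm_add_sq_real]
  have h2 : ‖(1 - u) • gr + (1 - v) • gc‖ ^ 2
      = (1 - u) ^ 2 * ‖gr‖ ^ 2 + 2 * ((1 - u) * (1 - v) * s) + (1 - v) ^ 2 * ‖gc‖ ^ 2 := by
    rw [norm_add_sq_real, norm_smul, norm_smul, real_inner_smul_left,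
      real_inner_smul_right, mul_pow, mul_pow, Real.norm_eq_abs, Real.norm_eq_abs,
      sq_abs, sq_abs, ← hs]
    ring
  rw [h1, h2, hu, hv]
  have hpos2 : (0:ℝ) < ‖(1/2 : ℝ)‖ ^ 2 := by norm_num
  exact mul_lt_mul_of_pos_left
    (pcrpo_key_scalar (‖gr‖ ^ 2) (‖gc‖ ^ 2) s (by positivity) (by positivity) hpos cs) hpos2
end
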